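/- Let g : ℝ → ℝ be a differentiable function, N a natural number, f : Fin N → ℝ, and W ∈ ℝ. Suppose b* : Fin N → ℝ satisfies ∑_i f_i · b*_i = W and minimizes ∑_i g(b_i) over all b : Fin N → ℝ with ∑_i f_i · b_i = W. Then for all indices i, j one has g'(b*_i) · f_j = g'(b*_j) · f_i. In particular, if f_i > 0 and f_j > 0 then g'(b*_i)/f_i = g'(b*_j)/f_j, i.e. g'(b*_i)/g'(b*_j) = f_i/f_j. -/

import Mathlib

/-- necessity part of Proposition 4: if `g` is differentiable
and `b*` minimizes `∑ i, g (b i)` over all allocations `b` with wastage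
`∑ i, f i * b i = W`, then `g'(b*_i) · f_j = g'(b*_j) · f_i` for all `i, j`;
in particular, when `f_i > 0` and `f_j > 0`,
`g'(b*_i) / f_i = g'(b*_j) / f_j`. -/
theorem min_skip_implies_proportional_derivatives
    (g : ℝ → ℝ) (hdiff : Differentiable ℝ g)
    (N : ℕ) (f : Fin N → ℝ) (W : ℝ)
    (bstar : Fin N → ℝ) (hconstr : ∑ i, f i * bstar i = W)
    (hmin : ∀ b : Fin N → ℝ, ∑ i, f i * b i = W →
      ∑ i, g (bstar i) ≤ ∑ i, g (b i)) :
    (∀ i j : Fin N, deriv g (bstar i) * f j = deriv g (bstar j) * f i) ∧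
    (∀ i j : Fin N, 0 < f i → 0 < f j →
      deriv g (bstar i) / f i = deriv g (bstar j) / f j) := by
  have key : ∀ i j : Fin N, deriv g (bstar i) * f j = deriv g (bstar j) * f i := by
    intro i j
    rcases eq_or_ne i j with rfl | hij
    · ring
    set c : Fin N → ℝ := fun k => if k = i then f j else if k = j then - f i else 0 with hc
    have hcsum : ∀ w : Fin N → ℝ, ∑ k, w k * c k = w i * f j - w j * f i := by
      intro w
      have : ∀ k, w k * c k =
          (if k = i then w k * f j else 0) + (if k = j then w k * (- f i) else 0) := by
        intro k
        rcases eq_or_ne k i with rfl | hki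
        · simp [hc, hij]
        · rcases eq_or_ne k j with rfl | hkj
          · simp [hc, hki]
          · simp [hc, hki, hkj]
      rw [Finset.sum_congr rfl (fun k _ => this k), Finset.sum_add_distrib,
        Finset.sum_ite_eq' Finset.univ i (fun k => w k * f j),
        Finset.sum_ite_eq' Finset.univ j (fun k => w k * (- f i))]
      simp; ring
    set h : ℝ → ℝ := fun t => ∑ k, g (bstar k + t * c k) with hh
    have hconstr' : ∀ t : ℝ, ∑ k, f k * (bstar k + t * c k) = W := by
      intro t
      have : ∑ k, f k * (bstar k + t * c k)
          = (∑ k, f k * bstar k) + t * ∑ k, f k * c k := by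
        rw [Finset.mul_sum, ← Finset.sum_add_distrib]
        congr 1; ext k; ring
      rw [this, hcsum, hconstr]; ring
    have hmin' : ∀ t : ℝ, h 0 ≤ h t := by
      intro t
      have := hmin (fun k => bstar k + t * c k) (hconstr' t)
      simpa [hh] using this
    have hloc : IsLocalMin h 0 := by
      apply IsMinOn.isLocalMin (s := Set.univ)
      · intro t _; exact hmin' t
      · exact Filter.univ_mem
    have hder : HasDerivAt h (∑ k, deriv g (bstar k) * c k) 0 := by
      apply HasDerivAt.fun_sum
      intro k _
      have h1 : HasDerivAt (fun t : ℝ => bstar k + t * c k) (c k) 0 := by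
        simpa using ((hasDerivAt_id (0:ℝ)).mul_const (c k)).const_add (bstar k)
      have h2 : HasDerivAt g (deriv g (bstar k + 0 * c k)) (bstar k + 0 * c k) :=
        (hdiff _).hasDerivAt
      simpa [Function.comp_def] using h2.comp 0 h1
    have hzero : (∑ k, deriv g (bstar k) * c k) = 0 := hloc.hasDerivAt_eq_zero hder
    rw [hcsum (fun k => deriv g (bstar k))] at hzero
    linarith
  refine ⟨key, fun i j hi hj => ?_⟩
  rw [div_eq_div_iff hi.ne' hj.ne']
  exact key i j
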